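/- Assume α* > 0. Then sInf {a ∈ [0,1] : for every ε > 0, D(a+ε) − 2·D(a) + D(max(a−ε, 0)) > 0} = α*; that is, the alternative estimate α_n*, defined as the smallest proportion at which every second difference of D is strictly positive, coincides with the identifiable upper bound α* on the mixing proportion. -/

import Mathlib

open MeasureTheory ENNReal

/-- The α_n* part of the paper's Lemma 2: assuming `α* > 0`, the smallest
proportion `a ∈ [0,1]` at which every second difference of `D` is strictly
positive coincides with the identifiable upper bound
`α* = sSup {a ∈ [0,1] : a • μp ≤ μu}` on the mixing proportion, where
`D a = a - ∫ min (a * r x) 1 ∂μu` and `r` is the real-valued Radon–Nikodym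
derivative of `μp` with respect to `μu`. -/
theorem alpha_n_star_eq_alpha_star {X : Type*} [MeasurableSpace X]
    (μp μu : Measure X) [IsProbabilityMeasure μp] [IsProbabilityMeasure μu]
    (hac : μp ≪ μu) (r : X → ℝ) (hr : r = fun x => (μp.rnDeriv μu x).toReal)
    (D : ℝ → ℝ) (hD : ∀ a, D a = a - ∫ x, min (a * r x) 1 ∂μu)
    (hpos : 0 < sSup {a : ℝ | a ∈ Set.Icc (0 : ℝ) 1 ∧ ENNReal.ofReal a • μp ≤ μu}) :
    sInf {a : ℝ | a ∈ Set.Icc (0 : ℝ) 1 ∧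
        ∀ ε > (0 : ℝ), D (a + ε) - 2 * D a + D (max (a - ε) 0) > 0}
      = sSup {a : ℝ | a ∈ Set.Icc (0 : ℝ) 1 ∧ ENNReal.ofReal a • μp ≤ μu} := by
  set S : Set ℝ := {a : ℝ | a ∈ Set.Icc (0 : ℝ) 1 ∧ ENNReal.ofReal a • μp ≤ μu} with hS
  set α : ℝ := sSup S with hα
  -- basic properties of S and α
  have hzero : (0 : ℝ) ∈ S := by
    refine ⟨⟨le_refl _, zero_le_one⟩, ?_⟩
    rw [ENNReal.ofReal_zero, zero_smul]
    intro s
    simp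
  have hbdd : BddAbove S := ⟨1, fun a ha => ha.1.2⟩
  have hα0 : 0 ≤ α := le_csSup hbdd hzero
  have hα1 : α ≤ 1 := csSup_le ⟨0, hzero⟩ fun a ha => ha.1.2
  -- measurability / nonnegativity / integrability of r
  have hrmeas : Measurable r := by rw [hr]; exact (μp.measurable_rnDeriv μu).ennreal_toReal
  have hrnn : ∀ x, 0 ≤ r x := by intro x; rw [hr]; exact ENNReal.toReal_nonneg
  have hint_r : Integrable r μu := by rw [hr]; exact Measure.integrable_toReal_rnDeriv
  have hintr1 : ∫ x, r x ∂μu = 1 := by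
    rw [hr, Measure.integral_toReal_rnDeriv hac]; simp
  -- the key bridge: membership in S vs. a.e. bound on a * r
  have key : ∀ a : ℝ, 0 ≤ a → ((ENNReal.ofReal a • μp ≤ μu) ↔ (∀ᵐ x ∂μu, a * r x ≤ 1)) := by
    intro a ha
    have hsmul_ac : ENNReal.ofReal a • μp ≪ μu := hac.smul_left _
    rw [← Measure.rnDeriv_le_one_iff_le hsmul_ac]
    have h1 : (ENNReal.ofReal a • μp).rnDeriv μu =ᵐ[μu] ENNReal.ofReal a • μp.rnDeriv μu :=
      Measure.rnDeriv_smul_left_of_ne_top μp μu ENNReal.ofReal_ne_top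
    have h2 : ∀ᵐ x ∂μu, μp.rnDeriv μu x < ∞ := μp.rnDeriv_lt_top μu
    have hiff : ∀ᵐ x ∂μu,
        ((ENNReal.ofReal a • μp).rnDeriv μu x ≤ 1 ↔ a * r x ≤ 1) := by
      filter_upwards [h1, h2] with x hx1 hx2
      have hd : μp.rnDeriv μu x ≠ ∞ := hx2.ne
      have hm : ENNReal.ofReal a * μp.rnDeriv μu x = ENNReal.ofReal (a * r x) := by
        rw [hr, ENNReal.ofReal_mul ha, ENNReal.ofReal_toReal hd]
      rw [hx1, Pi.smul_apply, smul_eq_mul, hm, ENNReal.ofReal_le_one]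
    constructor
    · intro h
      filter_upwards [h, hiff] with x hx hiffx
      exact hiffx.1 hx
    · intro h
      filter_upwards [h, hiff] with x hx hiffx
      exact hiffx.2 hx
  -- integrability of min (a * r x) 1 for 0 ≤ a
  have hint_min : ∀ a : ℝ, 0 ≤ a → Integrable (fun x => min (a * r x) 1) μu := by
    intro a ha
    refine Integrable.mono' (integrable_const 1)
      (((hrmeas.const_mul a).min measurable_const).aestronglyMeasurable) ?_
    refine ae_of_all _ fun x => ?_
    rw [Real.norm_eq_abs, abs_le]
    constructor
    · have : (0:ℝ) ≤ min (a * r x) 1 := le_min (mul_nonneg ha (hrnn x)) zero_le_one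
      linarith
    · exact min_le_right _ _
  -- D vanishes when a * r ≤ 1 a.e.
  have hDzero : ∀ a : ℝ, 0 ≤ a → (∀ᵐ x ∂μu, a * r x ≤ 1) → D a = 0 := by
    intro a ha hae
    have hcong : ∫ x, min (a * r x) 1 ∂μu = ∫ x, a * r x ∂μu := by
      refine integral_congr_ae ?_
      filter_upwards [hae] with x hx
      exact min_eq_left hx
    rw [hD a, hcong, integral_const_mul, hintr1, mul_one, sub_self]
  -- α * r ≤ 1 a.e.
  have hae_α : ∀ᵐ x ∂μu, α * r x ≤ 1 := by
    have haen : ∀ n : ℕ, ∀ᵐ x ∂μu, (α - α / (n + 1)) * r x ≤ 1 := by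
      intro n
      have hn1 : (1 : ℝ) ≤ (n : ℝ) + 1 := by
        have : (0:ℝ) ≤ (n:ℝ) := Nat.cast_nonneg n
        linarith
      have hlt : α - α / (n + 1) < α := by
        have : 0 < α / ((n:ℝ) + 1) := by positivity
        linarith
      obtain ⟨b, hbS, hlt'⟩ := exists_lt_of_lt_csSup ⟨0, hzero⟩ hlt
      have hnn : 0 ≤ α - α / ((n:ℝ) + 1) := by
        have : α / ((n:ℝ) + 1) ≤ α := div_le_self hα0 hn1
        linarith
      -- downward closedness: (α - α/(n+1)) ∈ S-condition
      have hle : ENNReal.ofReal (α - α / (n + 1)) • μp ≤ μu := by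
        refine le_trans ?_ hbS.2
        intro s
        simp only [Measure.smul_apply, smul_eq_mul]
        exact mul_le_mul_left (ENNReal.ofReal_le_ofReal hlt'.le) _
      exact (key _ hnn).1 hle
    have hall : ∀ᵐ x ∂μu, ∀ n : ℕ, (α - α / (n + 1)) * r x ≤ 1 := ae_all_iff.2 haen
    filter_upwards [hall] with x hx
    have htend : Filter.Tendsto (fun n : ℕ => (α - α / (n + 1)) * r x)
        Filter.atTop (nhds (α * r x)) := by
      have h0 : Filter.Tendsto (fun n : ℕ => α / ((n:ℝ) + 1)) Filter.atTop (nhds 0) := by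
        have := tendsto_one_div_add_atTop_nhds_zero_nat (𝕜 := ℝ)
        have h2 := this.const_mul α
        simpa [div_eq_mul_inv, mul_comm] using h2
      have := ((tendsto_const_nhds (x := α)).sub h0).mul_const (r x)
      simpa using this
    exact le_of_tendsto htend (Filter.Eventually.of_forall hx)
  -- D vanishes on [0, α]
  have hD_zero_le : ∀ a : ℝ, 0 ≤ a → a ≤ α → D a = 0 := by
    intro a ha haα
    refine hDzero a ha ?_
    filter_upwards [hae_α] with x hx
    exact le_trans (mul_le_mul_of_nonneg_right haα (hrnn x)) hx
  -- D is strictly positive above α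
  have hD_pos : ∀ b : ℝ, α < b → 0 < D b := by
    intro b hαb
    have hb0 : 0 < b := lt_trans hpos hαb
    rcases le_or_gt b 1 with hb1 | hb1
    · by_contra h
      push_neg at h
      have hmin_le : ∀ x, min (b * r x) 1 ≤ b * r x := fun x => min_le_left _ _
      have hint_br : Integrable (fun x => b * r x) μu := hint_r.const_mul b
      have h1 : ∫ x, min (b * r x) 1 ∂μu ≤ ∫ x, b * r x ∂μu :=
        integral_mono (hint_min b hb0.le) hint_br hmin_le
      have h2 : ∫ x, b * r x ∂μu = b := by rw [integral_const_mul, hintr1, mul_one]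
      have hDb : D b = b - ∫ x, min (b * r x) 1 ∂μu := hD b
      have heq : ∫ x, (b * r x - min (b * r x) 1) ∂μu = 0 := by
        rw [integral_sub hint_br (hint_min b hb0.le), h2]
        rw [hDb] at h
        linarith
      have hzero' := (integral_eq_zero_iff_of_nonneg_ae
        (ae_of_all _ fun x => sub_nonneg.2 (hmin_le x))
        (hint_br.sub (hint_min b hb0.le))).1 heq
      have haeb : ∀ᵐ x ∂μu, b * r x ≤ 1 := by
        filter_upwards [hzero'] with x hx
        simp only [Pi.zero_apply] at hx
        have h5 : b * r x = min (b * r x) 1 := by linarith [sub_eq_zero.1 hx]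
        rw [h5]
        exact min_le_right _ _
      have hbS : b ∈ S := ⟨⟨hb0.le, hb1⟩, (key b hb0.le).2 haeb⟩
      exact absurd (le_csSup hbdd hbS) (not_le.2 hαb)
    · have h1 : ∫ x, min (b * r x) 1 ∂μu ≤ ∫ x, (1:ℝ) ∂μu :=
        integral_mono (hint_min b hb0.le) (integrable_const 1) fun x => min_le_right _ _
      have h2 : ∫ x, (1:ℝ) ∂μu = 1 := by simp
      rw [hD b]
      linarith
  -- the second-difference set T
  set T : Set ℝ := {a : ℝ | a ∈ Set.Icc (0 : ℝ) 1 ∧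
      ∀ ε > (0 : ℝ), D (a + ε) - 2 * D a + D (max (a - ε) 0) > 0} with hT
  have hαT : α ∈ T := by
    refine ⟨⟨hα0, hα1⟩, fun ε hε => ?_⟩
    have h1 : D α = 0 := hD_zero_le α hα0 le_rfl
    have h2 : D (max (α - ε) 0) = 0 :=
      hD_zero_le _ (le_max_right _ _) (max_le (by linarith) hα0)
    have h3 : 0 < D (α + ε) := hD_pos _ (by linarith)
    rw [h1, h2]
    linarith
  have hlb : ∀ a ∈ T, α ≤ a := by
    intro a haT
    by_contra hcon
    push_neg at hcon
    have ha0 : 0 ≤ a := haT.1.1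
    set ε := (α - a) / 2 with hε
    have hεpos : 0 < ε := by rw [hε]; linarith
    have h1 : D (a + ε) = 0 := hD_zero_le _ (by linarith) (by rw [hε]; linarith)
    have h2 : D a = 0 := hD_zero_le a ha0 hcon.le
    have h3 : D (max (a - ε) 0) = 0 :=
      hD_zero_le _ (le_max_right _ _) (max_le (by linarith) hα0)
    have := haT.2 ε hεpos
    rw [h1, h2, h3] at this
    linarith
  exact le_antisymm (csInf_le ⟨0, fun x hx => hx.1.1⟩ hαT) (le_csInf ⟨α, hαT⟩ hlb)
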